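/- If the kernel {γ_j}_{0≤j≤J} satisfies the Parseval condition Σ_{j=0}^J |γ_j(r)|² = 1 for all r ∈ {1,…,k}, then for all f ∈ L²(G): Σ_{j=0}^J ‖ψ_{γ_j} ∗ f‖² = ‖f‖². -/

import Mathlib

open scoped BigOperators
open MeasureTheory

noncomputable def conv {G : Type*} [Group G] [Fintype G] (f g : G → ℂ) : G → ℂ :=
  fun x => (Fintype.card G : ℂ)⁻¹ * ∑ y, f y * g (y⁻¹ * x)

noncomputable def nsq {G : Type*} [Fintype G] (f : G → ℂ) : ℝ :=
  (Fintype.card G : ℝ)⁻¹ * ∑ x, Complex.normSq (f x)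

noncomputable def ip {G : Type*} [Fintype G] (f g : G → ℂ) : ℂ :=
  (Fintype.card G : ℂ)⁻¹ * ∑ x, f x * (starRingEnd ℂ) (g x)

noncomputable def gwavelet {G : Type*} [Group G] {k : ℕ} (d : Fin k → ℕ)
    (π : (r : Fin k) → G →* Matrix (Fin (d r)) (Fin (d r)) ℂ)
    (γ : Fin k → ℂ) : G → ℂ :=
  fun x => ∑ r, (d r : ℂ) * γ r * Matrix.trace (π r x)

noncomputable def Upath {G : Type*} [Group G] [Fintype G] {J : ℕ}
    (ψ : Fin J → G → ℂ) : List (Fin J) → (G → ℂ) → G → ℂ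
  | [], f => f
  | j :: p, f => Upath ψ p fun x => ((‖conv (ψ j) f x‖ : ℝ) : ℂ)

noncomputable def Sop {G : Type*} [Group G] [Fintype G] {k J : ℕ} (d : Fin k → ℕ)
    (π : (r : Fin k) → G →* Matrix (Fin (d r)) (Fin (d r)) ℂ)
    (γ : Fin (J + 1) → Fin k → ℂ) (p : List (Fin J)) (f : G → ℂ) : G → ℂ :=
  conv (gwavelet d π (γ 0)) (Upath (fun j => gwavelet d π (γ j.succ)) p f)


set_option linter.unusedSectionVars false
set_option maxHeartbeats 1000000

lemma mul_std_mul {m n : Type*} [Fintype m] [Fintype n] [DecidableEq m] [DecidableEq n]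
    (A : Matrix m m ℂ) (B : Matrix n n ℂ) (a i : m) (b j : n) :
    (A * Matrix.single a b (1:ℂ) * B) i j = A i a * B b j := by
  simp [Matrix.mul_apply, Matrix.single, Finset.sum_mul, ite_and,
    mul_ite, ite_mul, Finset.mul_sum]

lemma trace_std {m : Type*} [Fintype m] [DecidableEq m] (a b : m) :
    (Matrix.single a b (1:ℂ)).trace = if a = b then (1:ℂ) else 0 := by
  by_cases hab : a = b
  · subst hab; simp [Matrix.trace, Matrix.diag, Matrix.single, eq_comm]
  · simp [Matrix.trace, Matrix.diag, Matrix.single, hab]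
    exact fun h => hab h.symm

section reps
variable {G : Type*} [Group G] [Fintype G] {k : ℕ} {d : Fin k → ℕ}
  (π : (r : Fin k) → G →* Matrix (Fin (d r)) (Fin (d r)) ℂ)

lemma pi_inv (hunit : ∀ r x, π r x ∈ Matrix.unitaryGroup (Fin (d r)) ℂ)
    (r : Fin k) (x : G) : π r x⁻¹ = star (π r x) := by
  have h1 : π r x * star (π r x) = 1 := Matrix.mem_unitaryGroup_iff.mp (hunit r x)
  calc π r x⁻¹ = π r x⁻¹ * (π r x * star (π r x)) := by rw [h1, mul_one]
    _ = (π r x⁻¹ * π r x) * star (π r x) := by rw [mul_assoc]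
    _ = star (π r x) := by rw [← map_mul, inv_mul_cancel, map_one, one_mul]

lemma intertwine (r s : Fin k) (E : Matrix (Fin (d r)) (Fin (d s)) ℂ) (y : G) :
    π r y * (∑ x : G, π r x * E * π s x⁻¹) = (∑ x : G, π r x * E * π s x⁻¹) * π s y := by
  simp only [Matrix.mul_sum, Matrix.sum_mul]
  refine Fintype.sum_equiv (Equiv.mulLeft y) _ _ (fun x => ?_)
  show π r y * (π r x * E * π s x⁻¹) = π r (y * x) * E * π s (y * x)⁻¹ * π s y
  rw [mul_inv_rev, map_mul, map_mul]
  simp only [Matrix.mul_assoc]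
  rw [← map_mul, inv_mul_cancel, map_one, mul_one]

lemma schur_ne (hneq : ∀ (r s : Fin k), r ≠ s → ∀ T : Matrix (Fin (d r)) (Fin (d s)) ℂ,
      (∀ x, π r x * T = T * π s x) → T = 0)
    {r s : Fin k} (hrs : r ≠ s) (i a : Fin (d r)) (b j : Fin (d s)) :
    ∑ x : G, (π r x) i a * (π s x⁻¹) b j = 0 := by
  have h0 := hneq r s hrs _ (intertwine π r s (Matrix.single a b 1))
  have h1 := congrFun (congrFun h0 i) j
  rw [Matrix.sum_apply] at h1
  simp only [mul_std_mul] at h1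
  simpa using h1

lemma schur_eq
    (hirr : ∀ (r : Fin k) (M : Matrix (Fin (d r)) (Fin (d r)) ℂ),
      (∀ x, M * π r x = π r x * M) → ∃ c : ℂ, M = c • (1 : Matrix (Fin (d r)) (Fin (d r)) ℂ))
    (hdpos : ∀ r, 0 < d r)
    (r : Fin k) (i a b j : Fin (d r)) :
    ∑ x : G, (π r x) i a * (π r x⁻¹) b j =
      if a = b ∧ i = j then (Fintype.card G : ℂ) / d r else 0 := by
  obtain ⟨c, hc⟩ := hirr r (∑ x : G, π r x * Matrix.single a b (1:ℂ) * π r x⁻¹)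
    (fun x => (intertwine π r r (Matrix.single a b 1) x).symm)
  have htr : (∑ x : G, π r x * Matrix.single a b (1:ℂ) * π r x⁻¹).trace
      = (Fintype.card G : ℂ) * (if a = b then (1:ℂ) else 0) := by
    rw [Matrix.trace_sum]
    have he : ∀ x : G, (π r x * Matrix.single a b (1:ℂ) * π r x⁻¹).trace
        = (Matrix.single a b (1:ℂ)).trace := by
      intro x
      rw [Matrix.trace_mul_comm, ← mul_assoc, ← map_mul, inv_mul_cancel, map_one, one_mul]
    simp [he, trace_std, Finset.sum_const, mul_comm]
  have hd0 : (d r : ℂ) ≠ 0 := Nat.cast_ne_zero.mpr (hdpos r).ne'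
  have hctr : (∑ x : G, π r x * Matrix.single a b (1:ℂ) * π r x⁻¹).trace = c * d r := by
    rw [hc]; simp [Matrix.trace_smul, Matrix.trace_one, mul_comm]
  have hcval : c = (Fintype.card G : ℂ) * (if a = b then (1:ℂ) else 0) / d r := by
    rw [eq_div_iff hd0]; rw [htr] at hctr; linear_combination hctr.symm
  have h1 := congrFun (congrFun hc i) j
  rw [Matrix.sum_apply] at h1
  simp only [mul_std_mul] at h1
  rw [h1, hcval]
  by_cases hab : a = b <;> by_cases hij : i = j <;>
    simp [hab, hij, Matrix.one_apply, Matrix.smul_apply]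

end reps

section repsA
variable {G : Type*} [Group G] [Fintype G] {k : ℕ} {d : Fin k → ℕ}
  (π : (r : Fin k) → G →* Matrix (Fin (d r)) (Fin (d r)) ℂ)

lemma chi_inv (hunit : ∀ r x, π r x ∈ Matrix.unitaryGroup (Fin (d r)) ℂ) (r : Fin k) (x : G) :
    (π r x⁻¹).trace = (starRingEnd ℂ) ((π r x).trace) := by
  rw [pi_inv π hunit, Matrix.star_eq_conjTranspose, Matrix.trace_conjTranspose]; rfl

lemma chi_orth
    (hunit : ∀ r x, π r x ∈ Matrix.unitaryGroup (Fin (d r)) ℂ)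
    (hirr : ∀ (r : Fin k) (M : Matrix (Fin (d r)) (Fin (d r)) ℂ),
      (∀ x, M * π r x = π r x * M) → ∃ c : ℂ, M = c • (1 : Matrix (Fin (d r)) (Fin (d r)) ℂ))
    (hneq : ∀ (r s : Fin k), r ≠ s → ∀ T : Matrix (Fin (d r)) (Fin (d s)) ℂ,
      (∀ x, π r x * T = T * π s x) → T = 0)
    (hdpos : ∀ r, 0 < d r) (r s : Fin k) :
    ∑ x : G, (π r x).trace * (starRingEnd ℂ) ((π s x).trace)
      = if r = s then (Fintype.card G : ℂ) else 0 := by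
  have step1 : ∑ x : G, (π r x).trace * (starRingEnd ℂ) ((π s x).trace)
      = ∑ i, ∑ b, ∑ x : G, (π r x) i i * (π s x⁻¹) b b := by
    have e1 : ∀ x : G, (π r x).trace * (starRingEnd ℂ) ((π s x).trace)
        = ∑ i, ∑ b, (π r x) i i * (π s x⁻¹) b b := by
      intro x
      rw [← chi_inv π hunit]
      simp only [Matrix.trace, Matrix.diag]
      rw [Finset.sum_mul_sum]
    simp only [e1]
    rw [Finset.sum_comm]
    exact Finset.sum_congr rfl fun i _ => Finset.sum_comm
  rw [step1]
  by_cases hrs : r = s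
  · subst hrs
    have hd0 : (d r : ℂ) ≠ 0 := Nat.cast_ne_zero.mpr (hdpos r).ne'
    simp only [schur_eq π hirr hdpos r, and_self, if_pos rfl]
    have e2 : ∀ i : Fin (d r), (∑ b, if i = b then (Fintype.card G : ℂ) / d r else 0)
        = (Fintype.card G : ℂ) / d r := by
      intro i; simp
    rw [Finset.sum_congr rfl fun i _ => e2 i]
    simp only [Finset.sum_const, Finset.card_univ, Fintype.card_fin, nsmul_eq_mul]
    field_simp
    simp
  · simp only [schur_ne π hneq hrs]
    simp [hrs]

lemma chi_conjinv (r : Fin k) {x y : G} (h : IsConj x y) : (π r x).trace = (π r y).trace := by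
  obtain ⟨c, hc⟩ := isConj_iff.mp h
  rw [← hc, map_mul, map_mul, Matrix.trace_mul_comm, ← Matrix.mul_assoc, ← map_mul,
    inv_mul_cancel, map_one, Matrix.one_mul]

lemma completeness [DecidableEq G]
    (hunit : ∀ r x, π r x ∈ Matrix.unitaryGroup (Fin (d r)) ℂ)
    (hirr : ∀ (r : Fin k) (M : Matrix (Fin (d r)) (Fin (d r)) ℂ),
      (∀ x, M * π r x = π r x * M) → ∃ c : ℂ, M = c • (1 : Matrix (Fin (d r)) (Fin (d r)) ℂ))
    (hneq : ∀ (r s : Fin k), r ≠ s → ∀ T : Matrix (Fin (d r)) (Fin (d s)) ℂ,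
      (∀ x, π r x * T = T * π s x) → T = 0)
    (hdpos : ∀ r, 0 < d r)
    (hcard : Nat.card (ConjClasses G) = k) (x : G) :
    ∑ r, (d r : ℂ) * (π r x).trace = if x = 1 then (Fintype.card G : ℂ) else 0 := by
  classical
  haveI : Finite (ConjClasses G) := Quotient.finite _
  haveI : Fintype (ConjClasses G) := Fintype.ofFinite _
  have hN0 : (Fintype.card G : ℂ) ≠ 0 := Nat.cast_ne_zero.mpr Fintype.card_ne_zero
  have hk0 : k ≠ 0 := by
    rw [← hcard]; exact Nat.card_pos.ne'
  haveI : Nonempty (Fin k) := ⟨⟨0, Nat.pos_of_ne_zero hk0⟩⟩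
  set χb : Fin k → (ConjClasses G → ℂ) :=
    fun r => Quotient.lift (fun z => (π r z).trace) (fun a b h => chi_conjinv π r h) with hχb
  have hmk : ∀ r (z : G), χb r (ConjClasses.mk z) = (π r z).trace := fun r z => rfl
  have horth := chi_orth π hunit hirr hneq hdpos
  have hli : LinearIndependent ℂ χb := by
    rw [Fintype.linearIndependent_iff]
    intro g hg s
    have hx : ∀ z : G, ∑ r, g r * (π r z).trace = 0 := by
      intro z
      have h2 := congrFun hg (ConjClasses.mk z)
      simpa [Finset.sum_apply, hmk] using h2
    have h4 : ∑ z : G, (∑ r, g r * (π r z).trace) * (starRingEnd ℂ) ((π s z).trace) = 0 := by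
      simp [hx]
    have h5 : ∑ r, g r * ∑ z : G, (π r z).trace * (starRingEnd ℂ) ((π s z).trace) = 0 := by
      rw [← h4]
      simp only [Finset.sum_mul, Finset.mul_sum, mul_assoc]
      exact Finset.sum_comm
    simp only [horth] at h5
    have h6 : g s * (Fintype.card G : ℂ) = 0 := by
      rw [← h5]
      rw [Finset.sum_eq_single s]
      · simp
      · intro r _ hr; simp [hr]
      · intro h; exact absurd (Finset.mem_univ s) h
    exact (mul_eq_zero.mp h6).resolve_right hN0
  have hfr : Fintype.card (Fin k) = Module.finrank ℂ (ConjClasses G → ℂ) := by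
    rw [Module.finrank_pi, Fintype.card_fin, ← Nat.card_eq_fintype_card, hcard]
  set b := basisOfLinearIndependentOfCardEqFinrank hli hfr with hb
  have hbr : ∀ r, b r = χb r := fun r =>
    congrFun (coe_basisOfLinearIndependentOfCardEqFinrank hli hfr) r
  set δb : ConjClasses G → ℂ :=
    fun c => if c = ConjClasses.mk (1 : G) then (Fintype.card G : ℂ) else 0 with hδb
  have hrep := b.sum_repr δb
  have hpt : ∀ z : G, (if z = 1 then (Fintype.card G : ℂ) else 0)
      = ∑ r, b.repr δb r * (π r z).trace := by
    intro z
    have h7 := congrFun hrep (ConjClasses.mk z)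
    rw [Finset.sum_apply] at h7
    have h8 : δb (ConjClasses.mk z) = if z = 1 then (Fintype.card G : ℂ) else 0 := by
      by_cases hz : z = 1
      · simp [hδb, hz]
      · have hni : ¬ IsConj z 1 := fun hcj => hz (isConj_one_right.mp (isConj_comm.mp hcj))
        simp [hδb, hz, ConjClasses.mk_eq_mk_iff_isConj, hni]
    rw [← h8, ← h7]
    refine Finset.sum_congr rfl fun r _ => ?_
    rw [hbr r, Pi.smul_apply, hmk, smul_eq_mul]
  have hcc : ∀ s, b.repr δb s = (d s : ℂ) := by
    intro s
    have h9 : ∑ z : G, (if z = 1 then (Fintype.card G : ℂ) else 0)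
        * (starRingEnd ℂ) ((π s z).trace) = (Fintype.card G : ℂ) * (d s : ℂ) := by
      rw [Finset.sum_eq_single 1]
      · simp [Matrix.trace_one]
      · intro z _ hz; simp [hz]
      · intro h; exact absurd (Finset.mem_univ _) h
    have h10 : ∑ z : G, (∑ r, b.repr δb r * (π r z).trace) * (starRingEnd ℂ) ((π s z).trace)
        = b.repr δb s * (Fintype.card G : ℂ) := by
      have h5 : ∑ z : G, (∑ r, b.repr δb r * (π r z).trace) * (starRingEnd ℂ) ((π s z).trace)
          = ∑ r, b.repr δb r * ∑ z : G, (π r z).trace * (starRingEnd ℂ) ((π s z).trace) := by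
        simp only [Finset.sum_mul, Finset.mul_sum, mul_assoc]
        exact Finset.sum_comm
      rw [h5]
      simp only [horth]
      rw [Finset.sum_eq_single s]
      · simp
      · intro r _ hr; simp [hr]
      · intro h; exact absurd (Finset.mem_univ s) h
    have h11 : b.repr δb s * (Fintype.card G : ℂ) = (Fintype.card G : ℂ) * (d s : ℂ) := by
      rw [← h10, ← h9]
      exact Finset.sum_congr rfl fun z _ => by rw [← hpt z]
    rw [mul_comm] at h11
    exact mul_left_cancel₀ hN0 h11
  rw [hpt x]
  exact Finset.sum_congr rfl fun r _ => by rw [hcc r]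

lemma conv_trace_eq (s r : Fin k) (x : G) :
    conv (fun z => (π s z).trace) (fun z => (π r z).trace) x
      = (Fintype.card G : ℂ)⁻¹
        * ((∑ y : G, ((π s y).trace) • π r y⁻¹) * π r x).trace := by
  unfold conv
  congr 1
  rw [Matrix.sum_mul, Matrix.trace_sum]
  refine Finset.sum_congr rfl fun y _ => ?_
  rw [Matrix.smul_mul, Matrix.trace_smul, smul_eq_mul, ← map_mul]

lemma matrix_M_eq
    (hirr : ∀ (r : Fin k) (M : Matrix (Fin (d r)) (Fin (d r)) ℂ),
      (∀ x, M * π r x = π r x * M) → ∃ c : ℂ, M = c • (1 : Matrix (Fin (d r)) (Fin (d r)) ℂ))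
    (hdpos : ∀ r, 0 < d r) (r : Fin k) :
    (∑ y : G, ((π r y).trace) • π r y⁻¹)
      = ((Fintype.card G : ℂ) / d r) • (1 : Matrix (Fin (d r)) (Fin (d r)) ℂ) := by
  ext j b
  rw [Matrix.sum_apply]
  have e1 : ∀ y : G, ((π r y).trace • π r y⁻¹) j b = ∑ i, (π r y) i i * (π r y⁻¹) j b := by
    intro y
    rw [Matrix.smul_apply, smul_eq_mul, Matrix.trace, Finset.sum_mul]
    rfl
  simp only [e1]
  rw [Finset.sum_comm]
  have e2 : ∀ i, ∑ y : G, (π r y) i i * (π r y⁻¹) j b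
      = if i = j ∧ i = b then (Fintype.card G : ℂ) / d r else 0 :=
    fun i => schur_eq π hirr hdpos r i i j b
  simp only [e2]
  have e3 : ∀ i : Fin (d r), (if i = j ∧ i = b then (Fintype.card G : ℂ) / d r else 0)
      = if i = j then (if j = b then (Fintype.card G : ℂ) / d r else 0) else 0 := by
    intro i
    by_cases h1 : i = j
    · subst h1; simp
    · simp [h1]
  simp only [e3]
  rw [Finset.sum_ite_eq' Finset.univ j]
  simp [Matrix.smul_apply, Matrix.one_apply]

lemma matrix_M_ne
    (hneq : ∀ (r s : Fin k), r ≠ s → ∀ T : Matrix (Fin (d r)) (Fin (d s)) ℂ,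
      (∀ x, π r x * T = T * π s x) → T = 0)
    {r s : Fin k} (hsr : s ≠ r) :
    (∑ y : G, ((π s y).trace) • π r y⁻¹) = 0 := by
  ext j b
  rw [Matrix.sum_apply]
  have e1 : ∀ y : G, ((π s y).trace • π r y⁻¹) j b = ∑ i, (π s y) i i * (π r y⁻¹) j b := by
    intro y
    rw [Matrix.smul_apply, smul_eq_mul, Matrix.trace, Finset.sum_mul]
    rfl
  simp only [e1]
  rw [Finset.sum_comm]
  simp [schur_ne π hneq hsr]

lemma chi_conv
    (hirr : ∀ (r : Fin k) (M : Matrix (Fin (d r)) (Fin (d r)) ℂ),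
      (∀ x, M * π r x = π r x * M) → ∃ c : ℂ, M = c • (1 : Matrix (Fin (d r)) (Fin (d r)) ℂ))
    (hneq : ∀ (r s : Fin k), r ≠ s → ∀ T : Matrix (Fin (d r)) (Fin (d s)) ℂ,
      (∀ x, π r x * T = T * π s x) → T = 0)
    (hdpos : ∀ r, 0 < d r) (r s : Fin k) [Decidable (s = r)] (x : G) :
    conv (fun z => (π s z).trace) (fun z => (π r z).trace) x
      = if s = r then ((d r : ℂ))⁻¹ * (π r x).trace else 0 := by
  have hN0 : (Fintype.card G : ℂ) ≠ 0 := Nat.cast_ne_zero.mpr Fintype.card_ne_zero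
  have hd0 : (d r : ℂ) ≠ 0 := Nat.cast_ne_zero.mpr (hdpos r).ne'
  rw [conv_trace_eq]
  by_cases hsr : s = r
  · subst hsr
    rw [matrix_M_eq π hirr hdpos, if_pos rfl, Matrix.smul_mul, Matrix.trace_smul,
      Matrix.one_mul, smul_eq_mul]
    field_simp
  · rw [matrix_M_ne π hneq hsr, if_neg hsr, Matrix.zero_mul, Matrix.trace_zero, mul_zero]
end repsA

section convsA
variable {G : Type*} [Group G] [Fintype G]

lemma ip_self (f : G → ℂ) : ip f f = (nsq f : ℝ) := by
  unfold ip nsq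
  push_cast
  congr 1
  exact Finset.sum_congr rfl fun x _ => (Complex.mul_conj (f x))

lemma conv_assoc (a g f : G → ℂ) : conv (conv a g) f = conv a (conv g f) := by
  funext x
  unfold conv
  simp only [Finset.mul_sum, Finset.sum_mul]
  rw [Finset.sum_comm]
  refine Finset.sum_congr rfl fun y _ => ?_
  refine (Fintype.sum_equiv (Equiv.mulLeft y) _ _ (fun z => ?_)).symm
  simp only [Equiv.coe_mulLeft]
  have h1 : y⁻¹ * (y * z) = z := by group
  have h2 : (y * z)⁻¹ * x = z⁻¹ * (y⁻¹ * x) := by group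
  rw [h1, h2]
  ring

lemma ip_conv_adjoint (g u f : G → ℂ) :
    ip u (conv g f) = ip (conv (fun z => (starRingEnd ℂ) (g z⁻¹)) u) f := by
  have hcn : (starRingEnd ℂ) ((Fintype.card G : ℂ)⁻¹) = (Fintype.card G : ℂ)⁻¹ := by
    simp
  unfold ip conv
  congr 1
  simp only [map_mul, map_sum, hcn, Finset.mul_sum, Finset.sum_mul]
  rw [Finset.sum_comm]
  conv_rhs => rw [Finset.sum_comm]
  refine Fintype.sum_equiv (Equiv.inv G) _ _ (fun z => ?_)
  simp only [Equiv.inv_apply, inv_inv]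
  refine Fintype.sum_equiv (Equiv.mulLeft z⁻¹) _ _ (fun x => ?_)
  simp only [Equiv.coe_mulLeft]
  have h1 : z * (z⁻¹ * x) = x := by group
  rw [h1]
  ring

lemma conv_congr {a b : G → ℂ} (f : G → ℂ) (h : ∀ y, a y = b y) : conv a f = conv b f := by
  funext x; unfold conv; simp only [h]

lemma ip_congr_left {a b : G → ℂ} (f : G → ℂ) (h : ∀ y, a y = b y) : ip a f = ip b f := by
  unfold ip; simp only [h]

lemma conv_sum_left {ι : Type*} [Fintype ι] (c : ι → ℂ) (h : ι → G → ℂ) (f : G → ℂ) :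
    conv (fun y => ∑ r, c r * h r y) f = fun x => ∑ r, c r * conv (h r) f x := by
  funext x
  unfold conv
  simp only [Finset.sum_mul, Finset.mul_sum]
  rw [Finset.sum_comm]
  refine Finset.sum_congr rfl fun r _ => Finset.sum_congr rfl fun y _ => by ring

lemma conv_smul_left (c : ℂ) (h f : G → ℂ) :
    conv (fun y => c * h y) f = fun x => c * conv h f x := by
  funext x
  unfold conv
  simp only [Finset.mul_sum]
  exact Finset.sum_congr rfl fun y _ => by ring

lemma conv_zero_left (f : G → ℂ) : conv (fun _ => (0:ℂ)) f = fun _ => 0 := by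
  funext x; unfold conv; simp

lemma ip_zero_left (f : G → ℂ) : ip (fun _ => (0:ℂ)) f = 0 := by
  unfold ip; simp

lemma ip_smul_left (c : ℂ) (u v : G → ℂ) : ip (fun x => c * u x) v = c * ip u v := by
  unfold ip
  rw [Finset.mul_sum, Finset.mul_sum, Finset.mul_sum]
  refine Finset.sum_congr rfl fun x _ => by ring

lemma conv_delta [DecidableEq G] (f : G → ℂ) :
    conv (fun y => if y = 1 then (Fintype.card G : ℂ) else 0) f = f := by
  have hN0 : (Fintype.card G : ℂ) ≠ 0 := Nat.cast_ne_zero.mpr Fintype.card_ne_zero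
  funext x
  unfold conv
  rw [Finset.sum_eq_single 1]
  · simp only []
    rw [if_pos trivial, inv_one, one_mul, ← mul_assoc, inv_mul_cancel₀ hN0, one_mul]
  · intro y _ hy
    simp only []
    rw [if_neg hy, zero_mul]
  · intro h; exact absurd (Finset.mem_univ _) h

lemma ip_sum_sum {ι : Type*} [Fintype ι] (c c' : ι → ℂ) (F F' : ι → G → ℂ) :
    ip (fun x => ∑ r, c r * F r x) (fun x => ∑ s, c' s * F' s x)
      = ∑ r, ∑ s, c r * (starRingEnd ℂ) (c' s) * ip (F r) (F' s) := by
  unfold ip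
  have e1 : ∀ x : G, (∑ r, c r * F r x) * (starRingEnd ℂ) (∑ s, c' s * F' s x)
      = ∑ r, ∑ s, (c r * F r x) * ((starRingEnd ℂ) (c' s) * (starRingEnd ℂ) (F' s x)) := by
    intro x
    rw [map_sum, Finset.sum_mul_sum]
    exact Finset.sum_congr rfl fun r _ => Finset.sum_congr rfl fun s _ => by rw [map_mul]
  simp only [e1, Finset.mul_sum]
  rw [Finset.sum_comm]
  refine Finset.sum_congr rfl fun r _ => ?_
  rw [Finset.sum_comm]
  exact Finset.sum_congr rfl fun s _ => Finset.sum_congr rfl fun x _ => by ring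

lemma ip_sum_left {ι : Type*} [Fintype ι] (c : ι → ℂ) (F : ι → G → ℂ) (f : G → ℂ) :
    ip (fun x => ∑ r, c r * F r x) f = ∑ r, c r * ip (F r) f := by
  unfold ip
  simp only [Finset.sum_mul, Finset.mul_sum]
  rw [Finset.sum_comm]
  exact Finset.sum_congr rfl fun r _ => Finset.sum_congr rfl fun x _ => by ring
end convsA

theorem stmt8 {G : Type*} [Group G] [Fintype G]
    {k : ℕ} (d : Fin k → ℕ) (hdpos : ∀ r, 0 < d r)
    (π : (r : Fin k) → G →* Matrix (Fin (d r)) (Fin (d r)) ℂ)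
    (hunit : ∀ r x, π r x ∈ Matrix.unitaryGroup (Fin (d r)) ℂ)
    (hirr : ∀ (r : Fin k) (M : Matrix (Fin (d r)) (Fin (d r)) ℂ),
      (∀ x, M * π r x = π r x * M) → ∃ c : ℂ, M = c • (1 : Matrix (Fin (d r)) (Fin (d r)) ℂ))
    (hneq : ∀ (r s : Fin k), r ≠ s → ∀ T : Matrix (Fin (d r)) (Fin (d s)) ℂ,
      (∀ x, π r x * T = T * π s x) → T = 0)
    (hcard : Nat.card (ConjClasses G) = k)
    {J : ℕ} (γ : Fin (J + 1) → Fin k → ℂ)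
    (hPar : ∀ r : Fin k, ∑ j : Fin (J + 1), Complex.normSq (γ j r) = 1)
    (f : G → ℂ) :
    ∑ j : Fin (J + 1), nsq (conv (gwavelet d π (γ j)) f) = nsq f := by
  classical
  have hN0 : (Fintype.card G : ℂ) ≠ 0 := Nat.cast_ne_zero.mpr Fintype.card_ne_zero
  set χ : Fin k → G → ℂ := fun r z => (π r z).trace with hχ
  set F : Fin k → G → ℂ := fun r => conv (χ r) f with hF
  -- expand the wavelet convolution
  have hexp : ∀ g : Fin k → ℂ, conv (gwavelet d π g) f
      = fun x => ∑ r, ((d r : ℂ) * g r) * F r x := by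
    intro g
    rw [show gwavelet d π g = fun y => ∑ r, ((d r : ℂ) * g r) * χ r y from rfl]
    exact conv_sum_left _ _ f
  -- cross inner products
  have hcross : ∀ r s : Fin k, ip (F r) (F s)
      = if s = r then ((d r : ℂ))⁻¹ * ip (F r) f else 0 := by
    intro r s
    have h1 : ip (F r) (F s) = ip (conv (fun z => (starRingEnd ℂ) (χ s z⁻¹)) (F r)) f :=
      ip_conv_adjoint (χ s) (F r) f
    have h2 : ∀ z : G, (starRingEnd ℂ) (χ s z⁻¹) = χ s z := by
      intro z
      rw [hχ]
      simp only
      rw [chi_inv π hunit s z, Complex.conj_conj]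
    rw [h1, conv_congr (F r) h2, hF]
    simp only
    rw [← conv_assoc]
    have h3 : conv (χ s) (χ r) = fun x => if s = r then ((d r : ℂ))⁻¹ * χ r x else 0 := by
      funext x; exact chi_conv π hirr hneq hdpos r s x
    rw [h3]
    by_cases hsr : s = r
    · simp only [if_pos hsr]
      rw [conv_smul_left, ip_smul_left]
    · simp only [if_neg hsr]
      rw [conv_zero_left, ip_zero_left]
  -- per-j computation
  have hj : ∀ j : Fin (J + 1), (nsq (conv (gwavelet d π (γ j)) f) : ℂ)
      = ∑ r, (Complex.normSq (γ j r) : ℂ) * ((d r : ℂ) * ip (F r) f) := by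
    intro j
    rw [← ip_self, hexp (γ j), ip_sum_sum]
    refine Finset.sum_congr rfl fun r _ => ?_
    rw [Finset.sum_eq_single r]
    · rw [hcross r r, if_pos rfl]
      have hd0 : (d r : ℂ) ≠ 0 := Nat.cast_ne_zero.mpr (hdpos r).ne'
      rw [map_mul]
      have : (starRingEnd ℂ) ((d r : ℂ)) = (d r : ℂ) := by simp
      rw [this]
      rw [← Complex.mul_conj]
      field_simp
    · intro s _ hs
      rw [hcross r s, if_neg hs, mul_zero]
    · intro h; exact absurd (Finset.mem_univ _) h
  -- sum over j and apply Parseval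
  have hsum : ∑ j : Fin (J + 1), (nsq (conv (gwavelet d π (γ j)) f) : ℂ)
      = ∑ r, (d r : ℂ) * ip (F r) f := by
    rw [Finset.sum_congr rfl fun j _ => hj j, Finset.sum_comm]
    refine Finset.sum_congr rfl fun r _ => ?_
    rw [← Finset.sum_mul]
    have : ∑ j : Fin (J + 1), (Complex.normSq (γ j r) : ℂ) = 1 := by
      exact_mod_cast congrArg Complex.ofReal (hPar r)
    rw [this, one_mul]
  -- completeness
  have hfin : ∑ r, (d r : ℂ) * ip (F r) f = ip f f := by
    rw [← ip_sum_left]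
    have h5 : (fun x => ∑ r, (d r : ℂ) * F r x)
        = conv (fun y => if y = 1 then (Fintype.card G : ℂ) else 0) f := by
      rw [← conv_sum_left (fun r => (d r : ℂ)) χ f]
      exact conv_congr f (fun y => completeness π hunit hirr hneq hdpos hcard y)
    rw [h5, conv_delta]
  have : ∑ j : Fin (J + 1), (nsq (conv (gwavelet d π (γ j)) f) : ℂ) = (nsq f : ℂ) := by
    rw [hsum, hfin, ip_self]
  exact_mod_cast this
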